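/- Let L be a symmetric positive definite m×m real matrix and let E be a diagonal m×m matrix with strictly positive diagonal entries. Then for every subset I ⊆ {1,…,m} with |I| ≥ 2, ∑_{J ⊆ I} (−1)^{|I|−|J|} · log det((E L E)_J) = ∑_{J ⊆ I} (−1)^{|I|−|J|} · log det(L_J). In other words, the canonical interaction parameters θ^I (|I| ≥ 2) of the log-linear embedding of a determinantal point process are invariant under positive diagonal rescaling L ↦ ELE; equivalently, they do not depend on the item-wise (quality) parameters u^{α₁} = log L_{ii}, which is the fact underlying the vanishing of the e-embedding curvature components H^{(e)}_{α₁ α κ} in Corollary 3.3. -/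

import Mathlib

/-- The determinant of the principal submatrix of `M` with rows and columns in `A`
(equal to `1` when `A = ∅`). -/
noncomputable def pminor {m : ℕ} (M : Matrix (Fin m) (Fin m) ℝ) (A : Finset (Fin m)) : ℝ :=
  (M.submatrix (fun i : A => (i : Fin m)) (fun j : A => (j : Fin m))).det

open Matrix Finset

lemma posdef_submatrix {n α : Type*} [Fintype n] [Fintype α] [DecidableEq n] [DecidableEq α]
    {M : Matrix n n ℝ} (hM : M.PosDef) {e : α → n} (he : Function.Injective e) :
    (M.submatrix e e).PosDef := by
  classical
  set P : Matrix n α ℝ := (1 : Matrix n n ℝ).submatrix id e with hP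
  have hsub : M.submatrix e e = Pᵀ * M * P := by
    ext a b
    simp [hP, Matrix.mul_apply, Matrix.one_apply]
  rw [Matrix.posDef_iff_dotProduct_mulVec]
  constructor
  · have h1 := hM.1
    rw [Matrix.IsHermitian, Matrix.conjTranspose_submatrix, h1.eq]
  · intro x hx
    have hPx : ∀ a, (P *ᵥ x) (e a) = x a := by
      intro a
      simp [hP, Matrix.mulVec, dotProduct, Matrix.one_apply, he.eq_iff]
    have hne : P *ᵥ x ≠ 0 := by
      obtain ⟨a, ha⟩ := Function.ne_iff.mp hx
      intro h
      apply ha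
      rw [← hPx a, h]
      rfl
    have key : star x ⬝ᵥ (M.submatrix e e) *ᵥ x = star (P *ᵥ x) ⬝ᵥ M *ᵥ (P *ᵥ x) := by
      rw [hsub, ← Matrix.mulVec_mulVec, ← Matrix.mulVec_mulVec, dotProduct_mulVec,
        star_trivial, star_trivial, Matrix.vecMul_transpose]
    rw [key]
    exact hM.dotProduct_mulVec_pos hne

lemma pminor_pos {m : ℕ} {M : Matrix (Fin m) (Fin m) ℝ} (hM : M.PosDef)
    (A : Finset (Fin m)) : 0 < pminor M A :=
  (posdef_submatrix hM (fun a b h => Subtype.ext h :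
    Function.Injective fun i : A => (i : Fin m))).det_pos

lemma pminor_scale {m : ℕ} (L : Matrix (Fin m) (Fin m) ℝ) (d : Fin m → ℝ)
    (J : Finset (Fin m)) :
    pminor (Matrix.diagonal d * L * Matrix.diagonal d) J = (∏ i ∈ J, d i) ^ 2 * pminor L J := by
  classical
  unfold pminor
  have hsub : (Matrix.diagonal d * L * Matrix.diagonal d).submatrix
      (fun i : J => (i : Fin m)) (fun j : J => (j : Fin m))
      = Matrix.diagonal (fun a : J => d a) *
        (L.submatrix (fun i : J => (i : Fin m)) (fun j : J => (j : Fin m))) *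
        Matrix.diagonal (fun a : J => d a) := by
    ext a b
    simp [Matrix.mul_apply, Matrix.diagonal, Finset.sum_ite_eq, Finset.mul_sum, mul_comm,
      mul_assoc, mul_left_comm]
  rw [hsub, Matrix.det_mul, Matrix.det_mul, Matrix.det_diagonal]
  have : ∏ a : J, d a = ∏ i ∈ J, d i := Finset.prod_coe_sort J d
  rw [this]
  ring

lemma inner_alt_sum {m : ℕ} (I : Finset (Fin m)) (hI : 2 ≤ I.card) (i : Fin m) (hi : i ∈ I) :
    ∑ J ∈ I.powerset.filter (fun J => i ∈ J), (-1 : ℝ) ^ (I.card - J.card) = 0 := by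
  classical
  set I' := I.erase i with hI'
  have hcard : I.card = I'.card + 1 := by
    rw [hI', Finset.card_erase_of_mem hi]
    omega
  have hne : I'.Nonempty := by
    rw [← Finset.card_pos]
    omega
  have hbij : ∑ J ∈ I.powerset.filter (fun J => i ∈ J), (-1 : ℝ) ^ (I.card - J.card)
      = ∑ K ∈ I'.powerset, (-1 : ℝ) ^ (I'.card - K.card) := by
    refine Finset.sum_bij' (fun J _ => J.erase i) (fun K _ => insert i K) ?_ ?_ ?_ ?_ ?_
    case refine_1 =>
      intro J hJ
      rw [Finset.mem_filter, Finset.mem_powerset] at hJ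
      rw [Finset.mem_powerset]
      exact Finset.erase_subset_erase i hJ.1
    case refine_2 =>
      intro K hK
      rw [Finset.mem_powerset] at hK
      rw [Finset.mem_filter, Finset.mem_powerset]
      exact ⟨Finset.insert_subset hi (hK.trans (Finset.erase_subset i I)),
        Finset.mem_insert_self i K⟩
    case refine_3 =>
      intro J hJ
      rw [Finset.mem_filter] at hJ
      exact Finset.insert_erase hJ.2
    case refine_4 =>
      intro K hK
      rw [Finset.mem_powerset] at hK
      exact Finset.erase_insert (fun h => (Finset.mem_erase.mp (hK h)).1 rfl)
    case refine_5 =>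
      intro J hJ
      rw [Finset.mem_filter] at hJ
      rw [Finset.card_erase_of_mem hJ.2, hcard]
      congr 1
      have h1 : 1 ≤ J.card := Finset.card_pos.mpr ⟨i, hJ.2⟩
      omega
  rw [hbij]
  have hsplit : ∀ K ∈ I'.powerset, (-1 : ℝ) ^ (I'.card - K.card)
      = (-1 : ℝ) ^ I'.card * (-1 : ℝ) ^ K.card := by
    intro K hK
    have hk : K.card ≤ I'.card := Finset.card_le_card (Finset.mem_powerset.mp hK)
    have h1 : (-1 : ℝ) ^ (I'.card - K.card) * (-1 : ℝ) ^ K.card = (-1 : ℝ) ^ I'.card := by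
      rw [← pow_add, Nat.sub_add_cancel hk]
    have h2 : ((-1 : ℝ) ^ K.card) * (-1 : ℝ) ^ K.card = 1 := by
      rw [← pow_add, ← two_mul, pow_mul]
      norm_num
    calc (-1 : ℝ) ^ (I'.card - K.card)
        = (-1 : ℝ) ^ (I'.card - K.card) * (((-1 : ℝ) ^ K.card) * (-1 : ℝ) ^ K.card) := by
          rw [h2, mul_one]
      _ = ((-1 : ℝ) ^ (I'.card - K.card) * (-1 : ℝ) ^ K.card) * (-1 : ℝ) ^ K.card := by ring
      _ = (-1 : ℝ) ^ I'.card * (-1 : ℝ) ^ K.card := by rw [h1]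
  rw [Finset.sum_congr rfl hsplit, ← Finset.mul_sum]
  have hz : ∑ K ∈ I'.powerset, (-1 : ℝ) ^ K.card = 0 := by
    have h := Finset.sum_powerset_neg_one_pow_card_of_nonempty hne
    exact_mod_cast h
  rw [hz, mul_zero]

lemma alt_sum_linear_zero {m : ℕ} (I : Finset (Fin m)) (hI : 2 ≤ I.card) (c : Fin m → ℝ) :
    ∑ J ∈ I.powerset, (-1 : ℝ) ^ (I.card - J.card) * ∑ i ∈ J, c i = 0 := by
  classical
  have step1 : ∀ J ∈ I.powerset, (-1 : ℝ) ^ (I.card - J.card) * ∑ i ∈ J, c i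
      = ∑ i ∈ I, if i ∈ J then (-1 : ℝ) ^ (I.card - J.card) * c i else 0 := by
    intro J hJ
    rw [Finset.mem_powerset] at hJ
    rw [Finset.mul_sum, ← Finset.sum_subset hJ (fun x _ hx => by simp [hx])]
    exact Finset.sum_congr rfl (fun x hx => by simp [hx])
  rw [Finset.sum_congr rfl step1, Finset.sum_comm]
  apply Finset.sum_eq_zero
  intro i hi
  rw [← Finset.sum_filter, ← Finset.sum_mul, inner_alt_sum I hI i hi, zero_mul]

theorem theta_invariant_under_diagonal_scaling (m : ℕ) (L : Matrix (Fin m) (Fin m) ℝ)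
    (hsymm : L.IsSymm) (hL : L.PosDef)
    (d : Fin m → ℝ) (hd : ∀ i, 0 < d i)
    (E : Matrix (Fin m) (Fin m) ℝ) (hE : E = Matrix.diagonal d)
    (I : Finset (Fin m)) (hI : 2 ≤ I.card) :
    ∑ J ∈ I.powerset, (-1 : ℝ) ^ (I.card - J.card) * Real.log (pminor (E * L * E) J)
      = ∑ J ∈ I.powerset, (-1 : ℝ) ^ (I.card - J.card) * Real.log (pminor L J) := by
  subst hE
  have hlog : ∀ J ∈ I.powerset, Real.log (pminor (Matrix.diagonal d * L * Matrix.diagonal d) J)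
      = (∑ i ∈ J, 2 * Real.log (d i)) + Real.log (pminor L J) := by
    intro J _
    rw [pminor_scale L d J]
    have hprod : 0 < ∏ i ∈ J, d i := Finset.prod_pos (fun i _ => hd i)
    rw [Real.log_mul (pow_ne_zero _ hprod.ne') (pminor_pos hL J).ne', Real.log_pow,
      Real.log_prod (fun i _ => (hd i).ne'), Finset.mul_sum]
    push_cast
    rw [Finset.sum_congr rfl (fun x _ => (mul_comm (2:ℝ) (Real.log (d x))))]
  calc ∑ J ∈ I.powerset, (-1 : ℝ) ^ (I.card - J.card) *
        Real.log (pminor (Matrix.diagonal d * L * Matrix.diagonal d) J)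
      = ∑ J ∈ I.powerset, ((-1 : ℝ) ^ (I.card - J.card) * ∑ i ∈ J, 2 * Real.log (d i)
          + (-1 : ℝ) ^ (I.card - J.card) * Real.log (pminor L J)) := by
        refine Finset.sum_congr rfl fun J hJ => ?_
        rw [hlog J hJ]
        ring
    _ = ∑ J ∈ I.powerset, (-1 : ℝ) ^ (I.card - J.card) * ∑ i ∈ J, 2 * Real.log (d i)
          + ∑ J ∈ I.powerset, (-1 : ℝ) ^ (I.card - J.card) * Real.log (pminor L J) :=
        Finset.sum_add_distrib
    _ = ∑ J ∈ I.powerset, (-1 : ℝ) ^ (I.card - J.card) * Real.log (pminor L J) := by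
        rw [alt_sum_linear_zero I hI (fun i => 2 * Real.log (d i)), zero_add]
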